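/- arXiv:1204.0636 — 4 statements merged into one kernel-verified Lean document; each statement's English description precedes it below -/
import Mathlib

section
/- Let Σ be an alphabet with n ≥ 1 symbols. The set Σ_dw* (all distinguished words over Σ together with the empty word λ) is a finite set, and its cardinality equals σ_n = 1 + 2·n! + 2·∑_{k=1}^{n−1} n!/(n−k)!. -/
attribute [local instance] Classical.propDecidable

/-- A simple word over an alphabet: a nonempty word with pairwise distinct letters. -/
def IsSimpleWord {α : Type*} (w : List α) : Prop := w ≠ [] ∧ w.Nodup

/-- A simple cyclic word: a word of the form `a₁…a_k a₁` with `a₁…a_k` a simple word. -/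
def IsCyclicWord {α : Type*} (w : List α) : Prop :=
  ∃ (a : α) (l : List α), (a :: l).Nodup ∧ w = (a :: l) ++ [a]

/-- `Σ_dw*`: the set of distinguished words over `α`, together with the empty word `λ = []`. -/
def DW (α : Type*) : Set (List α) :=
  {w | w = [] ∨ IsSimpleWord w ∨ IsCyclicWord w}

/-- The latin composition of (distinguished) words.  If either word is `λ` or a simple
cyclic word the result is `λ`; for simple words `x = a₁…a_k`, `y = b₁…b_r`:
`x ∘ℓ y = a₁…a_k b₂…b_r` if `a_k = b₁` and `{a₁,…,a_k} ∩ {b₂,…,b_r} = ∅`;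
`x ∘ℓ y = a₁…a_k b₂…b_{r-1} a₁` if `a_k = b₁`, `b_r = a₁` and
`{a₁,…,a_k} ∩ {b₂,…,b_{r-1}} = ∅`; and `x ∘ℓ y = λ` otherwise. -/
noncomputable def latin {α : Type*} (x y : List α) : List α :=
  if IsSimpleWord x ∧ IsSimpleWord y then
    if x.getLast? = y.head? ∧ ∀ a ∈ x, a ∉ y.tail then
      x ++ y.tail
    else if x.getLast? = y.head? ∧ y.getLast? = x.head? ∧ ∀ a ∈ x, a ∉ y.tail.dropLast then
      x ++ y.tail.dropLast ++ x.head?.toList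
    else []
  else []

lemma card_nodup_length_eq (n k : ℕ) :
    {l : List (Fin n) | l.Nodup ∧ l.length = k}.ncard = n.descFactorial k := by
  rw [← Nat.card_coe_set_eq]
  have e : {l : List (Fin n) | l.Nodup ∧ l.length = k} ≃ (Fin k ↪ Fin n) :=
    { toFun := fun l => ⟨fun i => l.1.get (Fin.cast l.2.2.symm i), by
        intro i j h
        have := (List.nodup_iff_injective_get.mp l.2.1) h
        exact Fin.cast_injective _ this⟩
      invFun := fun f => ⟨List.ofFn f, List.nodup_ofFn.mpr f.injective, List.length_ofFn (f := f)⟩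
      left_inv := by
        rintro ⟨l, hnd, hlen⟩
        apply Subtype.ext
        apply List.ext_get (by simp [hlen])
        intro i h1 h2
        simp [List.get_ofFn]
        rfl
      right_inv := by
        intro f; ext i; simp [List.get_ofFn] }
  rw [Nat.card_congr e, Nat.card_eq_fintype_card, Fintype.card_embedding_eq,
    Fintype.card_fin, Fintype.card_fin]

lemma finite_nodup_length_eq (n k : ℕ) :
    {l : List (Fin n) | l.Nodup ∧ l.length = k}.Finite :=
  (List.finite_length_eq (Fin n) k).subset (fun _ hl => hl.2)

lemma card_union_aux (n : ℕ) (m : ℕ) :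
    (⋃ k ∈ Finset.Icc 1 m, {l : List (Fin n) | l.Nodup ∧ l.length = k}).Finite ∧
    (⋃ k ∈ Finset.Icc 1 m, {l : List (Fin n) | l.Nodup ∧ l.length = k}).ncard
      = ∑ k ∈ Finset.Icc 1 m, n.descFactorial k := by
  induction m with
  | zero => simp
  | succ m ih =>
    have hnot : m + 1 ∉ Finset.Icc 1 m := by simp
    have hins : Finset.Icc 1 (m + 1) = insert (m + 1) (Finset.Icc 1 m) := by
      ext x; simp [Finset.mem_Icc]; omega
    have hdisj : Disjoint {l : List (Fin n) | l.Nodup ∧ l.length = m + 1}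
        (⋃ k ∈ Finset.Icc 1 m, {l : List (Fin n) | l.Nodup ∧ l.length = k}) := by
      rw [Set.disjoint_left]
      rintro l ⟨hnd, hlen⟩ hl
      simp only [Set.mem_iUnion, Set.mem_setOf_eq, Finset.mem_Icc] at hl
      obtain ⟨k, ⟨hk1, hk2⟩, _, hlk⟩ := hl
      omega
    rw [hins, Finset.set_biUnion_insert, Finset.sum_insert hnot]
    constructor
    · exact (finite_nodup_length_eq n (m + 1)).union ih.1
    · rw [Set.ncard_union_eq hdisj (finite_nodup_length_eq n (m + 1)) ih.1,
        card_nodup_length_eq, ih.2]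

/-- for an alphabet with `n ≥ 1` symbols, the set `Σ_dw*` of distinguished
words together with `λ` is finite, of cardinality
`σ_n = 1 + 2·n! + 2·∑_{k=1}^{n-1} n!/(n-k)!`. -/
theorem dw_finite_card (n : ℕ) (hn : 1 ≤ n) :
    (DW (Fin n)).Finite ∧
      (DW (Fin n)).ncard =
        1 + 2 * n.factorial +
          2 * ∑ k ∈ Finset.Icc 1 (n - 1), n.factorial / (n - k).factorial := by
  classical
  haveI : Inhabited (Fin n) := ⟨⟨0, hn⟩⟩
  set S := {w : List (Fin n) | IsSimpleWord w} with hSdef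
  set C := {w : List (Fin n) | IsCyclicWord w} with hCdef
  have hSunion : S = ⋃ k ∈ Finset.Icc 1 n, {l : List (Fin n) | l.Nodup ∧ l.length = k} := by
    ext w
    simp only [hSdef, Set.mem_iUnion, Set.mem_setOf_eq, Finset.mem_Icc, IsSimpleWord]
    constructor
    · rintro ⟨hne, hnd⟩
      refine ⟨w.length, ⟨?_, ?_⟩, hnd, rfl⟩
      · exact List.length_pos_iff.mpr hne
      · have := hnd.length_le_card
        simpa using this
    · rintro ⟨k, ⟨hk1, _⟩, hnd, hlen⟩
      refine ⟨?_, hnd⟩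
      intro h; subst h; simp at hlen; omega
  have hSfin : S.Finite := hSunion ▸ (card_union_aux n n).1
  have hScard : S.ncard = ∑ k ∈ Finset.Icc 1 n, n.descFactorial k :=
    hSunion ▸ (card_union_aux n n).2
  have hCimg : C = (fun w => w ++ [w.headI]) '' S := by
    ext w
    constructor
    · rintro ⟨a, l, hnd, rfl⟩
      exact ⟨a :: l, ⟨List.cons_ne_nil a l, hnd⟩, by simp⟩
    · rintro ⟨v, ⟨hne, hnd⟩, rfl⟩
      obtain ⟨a, l, rfl⟩ := List.exists_cons_of_ne_nil hne
      exact ⟨a, l, hnd, by simp⟩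
  have hinj : Set.InjOn (fun w : List (Fin n) => w ++ [w.headI]) S := by
    intro x hx y hy h
    have := congrArg List.dropLast h
    simpa [List.dropLast_concat] using this
  have hCfin : C.Finite := hCimg ▸ hSfin.image _
  have hCcard : C.ncard = S.ncard := by rw [hCimg, Set.ncard_image_of_injOn hinj]
  have hSC : Disjoint S C := by
    rw [Set.disjoint_left]
    rintro w ⟨hne, hnd⟩ ⟨a, l, hnd', rfl⟩
    simp [List.nodup_append] at hnd
  have hem : ([] : List (Fin n)) ∉ S ∪ C := by
    rintro (⟨hne, _⟩ | ⟨a, l, _, h⟩)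
    · exact hne rfl
    · simp at h
  have hDW : DW (Fin n) = insert [] (S ∪ C) := by
    ext w
    simp only [DW, hSdef, hCdef, Set.mem_insert_iff, Set.mem_union, Set.mem_setOf_eq]
  constructor
  · rw [hDW]; exact ((hSfin.union hCfin).insert _)
  · rw [hDW, Set.ncard_insert_of_notMem hem (hSfin.union hCfin),
      Set.ncard_union_eq hSC hSfin hCfin, hCcard, hScard]
    have hsum : ∑ k ∈ Finset.Icc 1 n, n.descFactorial k
        = n.factorial + ∑ k ∈ Finset.Icc 1 (n - 1), n.factorial / (n - k).factorial := by
      have h1 : Finset.Icc 1 n = insert n (Finset.Icc 1 (n - 1)) := by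
        ext x; simp only [Finset.mem_Icc, Finset.mem_insert]; omega
      have h2 : n ∉ Finset.Icc 1 (n - 1) := by
        simp only [Finset.mem_Icc]; omega
      rw [h1, Finset.sum_insert h2, Nat.descFactorial_self]
      congr 1
      apply Finset.sum_congr rfl
      intro k hk
      simp only [Finset.mem_Icc] at hk
      rw [Nat.descFactorial_eq_div (by omega)]
    rw [hsum]
    ring
end

section
/- Let G = (V, E) be a directed graph on n vertices with latin matrix L and latin powers L^[k]. For all i ≠ j and all k with 1 ≤ k ≤ n − 1, the words of L^[k]_{ij} other than λ are exactly the vertex sequences of the elementary paths of length k from v_i to v_j: a word w belongs to L^[k]_{ij} \ {λ} if and only if w is a list (w₀, w₁, …, w_k) of k+1 pairwise distinct vertices with w₀ = v_i, w_k = v_j, and (w_t, w_{t+1}) ∈ E for all 0 ≤ t ≤ k − 1. -/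
attribute [local instance] Classical.propDecidable

/-- A distinguished language over `α`: a set of distinguished words containing `λ`. -/
def IsDLang {α : Type*} (L : Set (List α)) : Prop := L ⊆ DW α ∧ [] ∈ L

/-- The latin composition of languages: `L₁ ∘ℓ L₂ = {x ∘ℓ y : x ∈ L₁, y ∈ L₂}`. -/
def latinLang {α : Type*} (L₁ L₂ : Set (List α)) : Set (List α) :=
  {w | ∃ x ∈ L₁, ∃ y ∈ L₂, w = latin x y}

/-- The latin matrix of the directed graph `G = (Fin n, E)`: entry `(i,j)` is the
distinguished language `{λ, v_i v_j}` if `(v_i, v_j) ∈ E`, and `{λ}` otherwise. -/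
noncomputable def latinMat {n : ℕ} (E : Set (Fin n × Fin n)) :
    Fin n → Fin n → Set (List (Fin n)) :=
  fun i j => if (i, j) ∈ E then {[], [i, j]} else {[]}

/-- Matrix product over the semiring of distinguished languages:
`(M ∘ℓ N)_{ij} = ⋃_m M_{im} ∘ℓ N_{mj}`. -/
def latinMatMul {n : ℕ} (M N : Fin n → Fin n → Set (List (Fin n))) :
    Fin n → Fin n → Set (List (Fin n)) :=
  fun i j => ⋃ m : Fin n, latinLang (M i m) (N m j)

/-- Latin powers of a matrix: `L^[1] = L` and `L^[k] = L ∘ℓ L^[k-1]` for `k ≥ 2`. -/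
noncomputable def latinPow {n : ℕ} (M : Fin n → Fin n → Set (List (Fin n))) :
    ℕ → Fin n → Fin n → Set (List (Fin n))
  | 0 => fun _ _ => {[]}
  | 1 => M
  | k + 2 => latinMatMul M (latinPow M (k + 1))


lemma getLast?_cons_ne_nil' {α : Type*} (a : α) {l : List α} (h : l ≠ []) :
    (a :: l).getLast? = l.getLast? := by
  cases l with
  | nil => exact absurd rfl h
  | cons b t => exact List.getLast?_cons_cons

lemma dropLast_cons_ne_nil' {α : Type*} (a : α) {l : List α} (h : l ≠ []) :
    (a :: l).dropLast = a :: l.dropLast := by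
  cases l with
  | nil => exact absurd rfl h
  | cons b t => rfl

lemma eq_dropLast_append' {α : Type*} {l : List α} {a : α} (h : l.getLast? = some a) :
    l = l.dropLast ++ [a] :=
  (List.dropLast_append_getLast? a h).symm

lemma latinPow_main {n : ℕ} (E : Set (Fin n × Fin n)) (k : ℕ) (hk : 1 ≤ k) :
    ∀ (i j : Fin n) (w : List (Fin n)),
    (w ∈ latinPow (latinMat E) k i j ∧ w ≠ []) ↔
      (w.length = k + 1 ∧ w.head? = some i ∧ w.getLast? = some j ∧
        w.Chain' (fun a b => (a, b) ∈ E) ∧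
        ((i = j ∧ w.dropLast.Nodup) ∨ (i ≠ j ∧ w.Nodup))) := by
  induction k, hk using Nat.le_induction with
  | base =>
    intro i j w
    constructor
    · rintro ⟨hw, hne⟩
      simp only [latinPow, latinMat] at hw
      by_cases hE : (i, j) ∈ E
      · simp only [if_pos hE, Set.mem_insert_iff, Set.mem_singleton_iff] at hw
        rcases hw with rfl | rfl
        · exact absurd rfl hne
        · refine ⟨rfl, rfl, rfl, ?_, ?_⟩
          · simpa [List.Chain', List.isChain_cons_cons] using hE
          · rcases eq_or_ne i j with h | h
            · exact Or.inl ⟨h, by simp⟩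
            · exact Or.inr ⟨h, by simp [h]⟩
      · simp only [if_neg hE, Set.mem_singleton_iff] at hw
        exact absurd hw hne
    · rintro ⟨hlen, hhead, hlast, hchain, _⟩
      rw [List.length_eq_two] at hlen
      obtain ⟨a, b, rfl⟩ := hlen
      have hha : a = i := by simpa using hhead
      have hb : b = j := by simpa using hlast
      have hE : (a, b) ∈ E := by simpa [List.Chain', List.isChain_cons_cons] using hchain
      rw [hha, hb] at hE
      rw [hha, hb]
      refine ⟨?_, by simp⟩
      simp [latinPow, latinMat, hE]
  | succ k hk IH =>
    intro i j w
    obtain ⟨k', rfl⟩ : ∃ k', k = k' + 1 := ⟨k - 1, by omega⟩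
    have hpow : latinPow (latinMat E) (k' + 1 + 1)
        = latinMatMul (latinMat E) (latinPow (latinMat E) (k' + 1)) := rfl
    constructor
    · rintro ⟨hw, hne⟩
      rw [hpow] at hw
      obtain ⟨m, hm⟩ := Set.mem_iUnion.1 hw
      obtain ⟨x, hx, y, hy, rfl⟩ := hm
      by_cases hs : IsSimpleWord x ∧ IsSimpleWord y
      swap
      · rw [latin, if_neg hs] at hne; exact absurd rfl hne
      by_cases hE : (i, m) ∈ E
      swap
      · simp only [latinMat, if_neg hE, Set.mem_singleton_iff] at hx
        exact absurd hx hs.1.1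
      simp only [latinMat, if_pos hE, Set.mem_insert_iff, Set.mem_singleton_iff] at hx
      rcases hx with rfl | rfl
      · exact absurd rfl hs.1.1
      have him : i ≠ m := by simpa using hs.1.2
      obtain ⟨hylen, hyhead, hylast, hychain, -⟩ := (IH m j y).1 ⟨hy, hs.2.1⟩
      obtain ⟨b, t, rfl⟩ : ∃ b t, y = b :: t := by
        cases y with
        | nil => exact absurd rfl hs.2.1
        | cons b t => exact ⟨b, t, rfl⟩
      have hb : m = b := by have := hyhead; simp at this; exact this.symm
      subst hb
      have htlen : t.length = k' + 1 := by simpa using hylen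
      have ht : t ≠ [] := by intro h; rw [h] at htlen; simp at htlen
      have hynd : (m :: t).Nodup := hs.2.2
      have hmt : m ∉ t := (List.nodup_cons.1 hynd).1
      have htnd : t.Nodup := (List.nodup_cons.1 hynd).2
      have hlastt : t.getLast? = some j := by
        rwa [getLast?_cons_ne_nil' m ht] at hylast
      have hjt : j ∈ t := List.mem_of_mem_getLast? hlastt
      have hmj : m ≠ j := fun h => hmt (h ▸ hjt)
      by_cases hA : ([i, m].getLast? = (m :: t).head? ∧ ∀ a ∈ [i, m], a ∉ (m :: t).tail)
      · have hw' : latin [i, m] (m :: t) = i :: m :: t := by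
          rw [latin, if_pos hs, if_pos hA]; rfl
        rw [hw']
        have hit : i ∉ t := hA.2 i (by simp)
        have hiy : i ∉ m :: t := by simp [him, hit]
        refine ⟨by simp [htlen], rfl, by rw [List.getLast?_cons_cons]; exact hylast,
          List.isChain_cons_cons.2 ⟨hE, hychain⟩, Or.inr ⟨?_, List.nodup_cons.2 ⟨hiy, hynd⟩⟩⟩
        rintro rfl
        exact hiy (List.mem_cons_of_mem m hjt)
      by_cases hB : ([i, m].getLast? = (m :: t).head? ∧ (m :: t).getLast? = [i, m].head?
          ∧ ∀ a ∈ [i, m], a ∉ (m :: t).tail.dropLast)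
      · have hji : j = i := by
          have h2 := hB.2.1
          rw [hylast] at h2
          simpa using h2
        have hlastti : t.getLast? = some i := by rw [hlastt, hji]
        have hteq : t = t.dropLast ++ [i] := eq_dropLast_append' hlastti
        have hw' : latin [i, m] (m :: t) = i :: m :: t := by
          rw [latin, if_pos hs, if_neg hA, if_pos hB]
          show [i, m] ++ t.dropLast ++ [i] = i :: m :: t
          conv_rhs => rw [hteq]
          simp
        rw [hw']
        have hitd : i ∉ t.dropLast := hB.2.2 i (by simp)
        have hmtd : m ∉ t.dropLast := fun h => hmt (List.dropLast_subset t h)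
        have htdnd : t.dropLast.Nodup := (List.dropLast_sublist t).nodup htnd
        have hd : (i :: m :: t).dropLast = i :: m :: t.dropLast := by
          rw [List.dropLast_cons₂, dropLast_cons_ne_nil' m ht]
        refine ⟨by simp [htlen], rfl, by rw [List.getLast?_cons_cons]; exact hylast,
          List.isChain_cons_cons.2 ⟨hE, hychain⟩, Or.inl ⟨hji.symm, ?_⟩⟩
        rw [hd]
        exact List.nodup_cons.2 ⟨by simp [him, hitd],
          List.nodup_cons.2 ⟨hmtd, htdnd⟩⟩
      · rw [latin, if_pos hs, if_neg hA, if_neg hB] at hne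
        exact absurd rfl hne
    · rintro ⟨hlen, hhead, hlast, hchain, hnd⟩
      obtain ⟨v, rfl⟩ : ∃ v, w = i :: v := by
        cases w with
        | nil => simp at hlen
        | cons a v => exact ⟨v, by rw [show a = i by simpa using hhead]⟩
      obtain ⟨b, t, rfl⟩ : ∃ b t, v = b :: t := by
        cases v with
        | nil => simp at hlen
        | cons b t => exact ⟨b, t, rfl⟩
      have htlen : t.length = k' + 1 := by simpa using hlen
      have ht : t ≠ [] := by intro h; rw [h] at htlen; simp at htlen
      have hE : (i, b) ∈ E := (List.isChain_cons_cons.1 hchain).1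
      have hchain2 : (b :: t).Chain' (fun a b => (a, b) ∈ E) :=
        (List.isChain_cons_cons.1 hchain).2
      have hlast2 : (b :: t).getLast? = some j := by
        rwa [List.getLast?_cons_cons] at hlast
      have hlastt : t.getLast? = some j := by
        rwa [getLast?_cons_ne_nil' b ht] at hlast2
      have hjt : j ∈ t := List.mem_of_mem_getLast? hlastt
      rw [hpow]
      rcases hnd with ⟨hij, hdnd⟩ | ⟨hij, hwnd⟩
      · -- cyclic case: i = j
        have hd : (i :: b :: t).dropLast = i :: b :: t.dropLast := by
          rw [List.dropLast_cons₂, dropLast_cons_ne_nil' b ht]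
        rw [hd] at hdnd
        have hib : i ∉ b :: t.dropLast := (List.nodup_cons.1 hdnd).1
        have hnd2 : (b :: t.dropLast).Nodup := (List.nodup_cons.1 hdnd).2
        have him : i ≠ b := fun h => hib (h ▸ List.mem_cons_self (a := b) (l := t.dropLast))
        have hitd : i ∉ t.dropLast := fun h => hib (List.mem_cons_of_mem b h)
        have hbtd : b ∉ t.dropLast := (List.nodup_cons.1 hnd2).1
        have htdnd : t.dropLast.Nodup := (List.nodup_cons.1 hnd2).2
        have hlastti : t.getLast? = some i := by rw [hlastt, hij]
        have hteq : t = t.dropLast ++ [i] := eq_dropLast_append' hlastti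
        have hit : i ∈ t := List.mem_of_mem_getLast? hlastti
        have htnd : t.Nodup := by
          rw [hteq]
          simp [List.nodup_append, htdnd, hitd]
          exact fun a ha h => hitd (h ▸ ha)
        have hbt : b ∉ t := by
          intro h
          rw [hteq] at h
          rcases List.mem_append.1 h with h | h
          · exact hbtd h
          · have hb_i : b = i := by simpa using h
            exact him hb_i.symm
        have hbj : b ≠ j := by rw [← hij]; exact fun h => him h.symm
        have hynd : (b :: t).Nodup := List.nodup_cons.2 ⟨hbt, htnd⟩
        have hy : b :: t ∈ latinPow (latinMat E) (k' + 1) b j :=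
          ((IH b j (b :: t)).2
            ⟨by simp [htlen], rfl, hlast2, hchain2, Or.inr ⟨hbj, hynd⟩⟩).1
        have hs : IsSimpleWord [i, b] ∧ IsSimpleWord (b :: t) :=
          ⟨⟨by simp, by simp [him]⟩, ⟨by simp, hynd⟩⟩
        have hAfail : ¬ ([i, b].getLast? = (b :: t).head?
            ∧ ∀ a ∈ [i, b], a ∉ (b :: t).tail) := by
          rintro ⟨-, h⟩
          exact h i (by simp) hit
        have hBcond : [i, b].getLast? = (b :: t).head? ∧ (b :: t).getLast? = [i, b].head?
            ∧ ∀ a ∈ [i, b], a ∉ (b :: t).tail.dropLast := by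
          refine ⟨by simp, ?_, ?_⟩
          · rw [getLast?_cons_ne_nil' b ht, hlastti]; rfl
          · intro a ha
            rcases (by simpa using ha : a = i ∨ a = b) with rfl | rfl
            · exact hitd
            · exact hbtd
        have hw' : latin [i, b] (b :: t) = i :: b :: t := by
          rw [latin, if_pos hs, if_neg hAfail, if_pos hBcond]
          show [i, b] ++ t.dropLast ++ [i] = i :: b :: t
          conv_rhs => rw [hteq]
          simp
        exact ⟨Set.mem_iUnion.2 ⟨b, [i, b], by simp [latinMat, hE], b :: t, hy, hw'.symm⟩,
          by simp⟩
      · -- simple case: i ≠ j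
        have hib : i ∉ b :: t := (List.nodup_cons.1 hwnd).1
        have hynd : (b :: t).Nodup := (List.nodup_cons.1 hwnd).2
        have him : i ≠ b := fun h => hib (h ▸ List.mem_cons_self (a := b) (l := t))
        have hit : i ∉ t := fun h => hib (List.mem_cons_of_mem b h)
        have hbt : b ∉ t := (List.nodup_cons.1 hynd).1
        have hbj : b ≠ j := fun h => hbt (h ▸ hjt)
        have hy : b :: t ∈ latinPow (latinMat E) (k' + 1) b j :=
          ((IH b j (b :: t)).2
            ⟨by simp [htlen], rfl, hlast2, hchain2, Or.inr ⟨hbj, hynd⟩⟩).1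
        have hs : IsSimpleWord [i, b] ∧ IsSimpleWord (b :: t) :=
          ⟨⟨by simp, by simp [him]⟩, ⟨by simp, hynd⟩⟩
        have hA : [i, b].getLast? = (b :: t).head? ∧ ∀ a ∈ [i, b], a ∉ (b :: t).tail := by
          refine ⟨by simp, ?_⟩
          intro a ha
          rcases (by simpa using ha : a = i ∨ a = b) with rfl | rfl
          · exact hit
          · exact hbt
        have hw' : latin [i, b] (b :: t) = i :: b :: t := by
          rw [latin, if_pos hs, if_pos hA]; rfl
        exact ⟨Set.mem_iUnion.2 ⟨b, [i, b], by simp [latinMat, hE], b :: t, hy, hw'.symm⟩,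
          by simp⟩

/-- for `i ≠ j` and `1 ≤ k ≤ n - 1`, the words of `L^[k]_{ij}` other than
`λ` are exactly the vertex sequences of the elementary paths of length `k` from `v_i`
to `v_j`: lists `(w₀, …, w_k)` of `k+1` pairwise distinct vertices with `w₀ = v_i`,
`w_k = v_j` and `(w_t, w_{t+1}) ∈ E` for all `t`. -/
theorem latinPow_elementary_paths (n : ℕ) (hn : 1 ≤ n) (E : Set (Fin n × Fin n))
    (i j : Fin n) (hij : i ≠ j) (k : ℕ) (hk1 : 1 ≤ k) (hk2 : k ≤ n - 1)
    (w : List (Fin n)) :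
    (w ∈ latinPow (latinMat E) k i j ∧ w ≠ []) ↔
      (w.length = k + 1 ∧ w.Nodup ∧ w.head? = some i ∧ w.getLast? = some j ∧
        w.Chain' (fun a b => (a, b) ∈ E)) := by
  rw [latinPow_main E k hk1 i j w]
  constructor
  · rintro ⟨hlen, hhead, hlast, hchain, hnd⟩
    rcases hnd with ⟨h, -⟩ | ⟨-, h⟩
    · exact absurd h hij
    · exact ⟨hlen, h, hhead, hlast, hchain⟩
  · rintro ⟨hlen, hnd, hhead, hlast, hchain⟩
    exact ⟨hlen, hhead, hlast, hchain, Or.inr ⟨hij, hnd⟩⟩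
end

section
/- Let G = (V, E) be a directed graph on n vertices with latin matrix L and latin powers L^[k]. For all i and all k with 1 ≤ k ≤ n, the words of L^[k]_{ii} other than λ are exactly the vertex sequences of the elementary circuits of length k starting at v_i: a word w belongs to L^[k]_{ii} \ {λ} if and only if w is a list (w₀, w₁, …, w_k) of k+1 vertices with w₀ = w_k = v_i, the vertices w₀, …, w_{k−1} pairwise distinct, and (w_t, w_{t+1}) ∈ E for all 0 ≤ t ≤ k − 1. -/
attribute [local instance] Classical.propDecidable

section Aux

variable {n : ℕ}

lemma latinPow_succ_eq (M : Fin n → Fin n → Set (List (Fin n))) (k : ℕ) (hk : 1 ≤ k) :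
    latinPow M (k + 1) = latinMatMul M (latinPow M k) := by
  obtain ⟨k', rfl⟩ := Nat.exists_eq_add_of_le' hk
  rfl

lemma decomp {α : Type*} (w : List α) (h2 : 2 ≤ w.length) (a b : α)
    (ha : w.head? = some a) (hb : w.getLast? = some b) :
    ∃ u, w = a :: u ++ [b] := by
  match w with
  | [] => simp at ha
  | [c] => simp at h2
  | c :: d :: t =>
    rcases List.eq_nil_or_concat (d :: t) with h | ⟨u, e, h⟩
    · simp at h
    · rw [List.concat_eq_append] at h
      have hc : c = a := by simpa using ha
      have hbe : e = b := by
        have h3 : (c :: d :: t).getLast? = some e := by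
          rw [show c :: d :: t = (c :: u) ++ [e] by simp [h]]
          exact List.getLast?_concat
        rw [hb] at h3; exact (Option.some.inj h3).symm
      subst hc; subst hbe
      exact ⟨u, by simp [h]⟩

lemma nodup_concat_aux {α : Type*} (m j : α) (v : List α) (hmv : m ∉ v) (hmj : m ≠ j)
    (hjv : j ∉ v) (hvnd : v.Nodup) : (m :: v ++ [j]).Nodup := by
  simp [List.nodup_append, hmv, hmj, hjv, hvnd]; intro a ha h; exact hjv (h ▸ ha)

lemma latin_eval1 {α : Type*} (i m j : α) (v : List α) (him : i ≠ m) (hiv : i ∉ v)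
    (hij : i ≠ j) (hmv : m ∉ v) (hmj : m ≠ j) (hjv : j ∉ v) (hvnd : v.Nodup) :
    latin [i, m] (m :: v ++ [j]) = i :: (m :: v) ++ [j] := by
  have hsx : IsSimpleWord [i, m] := ⟨by simp, by simp [him]⟩
  have hsy : IsSimpleWord (m :: v ++ [j]) :=
    ⟨by simp, nodup_concat_aux m j v hmv hmj hjv hvnd⟩
  have hc1 : ([i, m] : List α).getLast? = (m :: v ++ [j]).head? ∧
      ∀ a ∈ ([i, m] : List α), a ∉ (m :: v ++ [j]).tail := by
    refine ⟨by simp, ?_⟩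
    intro a ha
    simp only [List.mem_cons, List.not_mem_nil, or_false] at ha
    simp only [List.cons_append, List.tail_cons, List.mem_append, List.mem_singleton, not_or]
    rcases ha with rfl | rfl
    · exact ⟨hiv, hij⟩
    · exact ⟨hmv, hmj⟩
  rw [latin, if_pos ⟨hsx, hsy⟩, if_pos hc1]
  simp

lemma latin_eval2 {α : Type*} (i m : α) (v : List α) (him : i ≠ m) (hiv : i ∉ v)
    (hmv : m ∉ v) (hvnd : v.Nodup) :
    latin [i, m] (m :: v ++ [i]) = i :: (m :: v) ++ [i] := by
  have hsx : IsSimpleWord [i, m] := ⟨by simp, by simp [him]⟩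
  have hsy : IsSimpleWord (m :: v ++ [i]) :=
    ⟨by simp, nodup_concat_aux m i v hmv him.symm hiv hvnd⟩
  have hdl : (m :: v ++ [i]).tail.dropLast = v := by
    simp only [List.cons_append, List.tail_cons]; exact List.dropLast_concat
  have hc1 : ¬ (([i, m] : List α).getLast? = (m :: v ++ [i]).head? ∧
      ∀ a ∈ ([i, m] : List α), a ∉ (m :: v ++ [i]).tail) := by
    rintro ⟨-, h2⟩
    exact h2 i (by simp) (by simp)
  have hc2 : ([i, m] : List α).getLast? = (m :: v ++ [i]).head? ∧
      (m :: v ++ [i]).getLast? = ([i, m] : List α).head? ∧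
      ∀ a ∈ ([i, m] : List α), a ∉ (m :: v ++ [i]).tail.dropLast := by
    refine ⟨by simp, ?_, ?_⟩
    · rw [List.getLast?_concat]; rfl
    · intro a ha
      simp only [List.mem_cons, List.not_mem_nil, or_false] at ha
      rw [hdl]
      rcases ha with rfl | rfl
      · exact hiv
      · exact hmv
  rw [latin, if_pos ⟨hsx, hsy⟩, if_neg hc1, if_pos hc2, hdl]
  simp

lemma key (E : Set (Fin n × Fin n)) (k : ℕ) (hk : 1 ≤ k) :
    ∀ (i j : Fin n) (w : List (Fin n)),
      (w ∈ latinPow (latinMat E) k i j ∧ w ≠ []) ↔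
      (∃ u, w = i :: u ++ [j] ∧ u.length + 1 = k ∧ (i :: u).Nodup ∧ j ∉ u ∧
        w.Chain' (fun a b => (a, b) ∈ E)) := by
  induction k, hk using Nat.le_induction with
  | base =>
    intro i j w
    constructor
    · rintro ⟨hw, hne⟩
      simp only [latinPow, latinMat] at hw
      by_cases hE : (i, j) ∈ E
      · rw [if_pos hE] at hw
        simp only [Set.mem_insert_iff, Set.mem_singleton_iff] at hw
        rcases hw with rfl | rfl
        · exact absurd rfl hne
        · exact ⟨[], rfl, rfl, by simp, by simp, by simp [hE, List.Chain']⟩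
      · rw [if_neg hE] at hw
        simp only [Set.mem_singleton_iff] at hw
        exact absurd hw hne
    · rintro ⟨u, rfl, hlen, -, -, hch⟩
      have hu : u = [] := List.length_eq_zero_iff.mp (by omega)
      subst hu
      have hE : (i, j) ∈ E := by simpa [List.Chain'] using hch
      refine ⟨?_, by simp⟩
      simp [latinPow, latinMat, hE]
  | succ k hk1 IH =>
    intro i j w
    rw [latinPow_succ_eq _ _ hk1]
    constructor
    · rintro ⟨hw, hne⟩
      simp only [latinMatMul, Set.mem_iUnion, latinLang, Set.mem_setOf_eq] at hw
      obtain ⟨m, x, hx, y, hy, hwxy⟩ := hw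
      have hs : IsSimpleWord x ∧ IsSimpleWord y := by
        by_contra h
        exact hne (by rw [hwxy, latin, if_neg h])
      have hxE : x = [i, m] ∧ (i, m) ∈ E := by
        simp only [latinMat] at hx
        by_cases hE : (i, m) ∈ E
        · rw [if_pos hE] at hx
          simp only [Set.mem_insert_iff, Set.mem_singleton_iff] at hx
          rcases hx with rfl | rfl
          · exact absurd rfl hs.1.1
          · exact ⟨rfl, hE⟩
        · rw [if_neg hE] at hx
          simp only [Set.mem_singleton_iff] at hx
          exact absurd hx hs.1.1
      obtain ⟨rfl, hE⟩ := hxE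
      have him : i ≠ m := by
        have h := hs.1.2; simp at h; exact h
      obtain ⟨v, rfl, hvlen, hvnd, hjv, hych⟩ := (IH m j y).mp ⟨hy, hs.2.1⟩
      have hynd := hs.2.2
      have hmv : m ∉ v := (List.nodup_cons.mp hvnd).1
      have hvnd' : v.Nodup := (List.nodup_cons.mp hvnd).2
      have hmj : m ≠ j := by
        rintro rfl
        rw [List.nodup_append] at hynd
        exact hynd.2.2 m List.mem_cons_self m (List.mem_singleton.mpr rfl) rfl
      subst hwxy
      by_cases hiv : i ∈ v
      · exfalso
        apply hne
        rw [latin, if_pos hs, if_neg, if_neg]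
        · rintro ⟨-, -, h3⟩
          have hdl : (m :: v ++ [j]).tail.dropLast = v := by
            simp only [List.cons_append, List.tail_cons]; exact List.dropLast_concat
          exact h3 i (by simp) (by rw [hdl]; exact hiv)
        · rintro ⟨-, h2⟩
          refine h2 i (by simp) ?_
          simp only [List.cons_append, List.tail_cons, List.mem_append]
          exact Or.inl hiv
      · by_cases hji : j = i
        · subst hji
          rw [latin_eval2 j m v him hiv hmv hvnd']
          refine ⟨m :: v, rfl, by simpa using hvlen, ?_, ?_, ?_⟩
          · simp only [List.nodup_cons, List.mem_cons, not_or]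
            exact ⟨⟨him, hiv⟩, hmv, hvnd'⟩
          · simp only [List.mem_cons, not_or]
            exact ⟨him, hiv⟩
          · rw [show (j : Fin n) :: (m :: v) ++ [j] = j :: (m :: (v ++ [j])) by simp,
              List.Chain', List.isChain_cons_cons]
            exact ⟨hE, by simpa [List.Chain'] using hych⟩
        · have hij : i ≠ j := fun h => hji h.symm
          rw [latin_eval1 i m j v him hiv hij hmv hmj hjv hvnd']
          refine ⟨m :: v, rfl, by simpa using hvlen, ?_, ?_, ?_⟩
          · simp only [List.nodup_cons, List.mem_cons, not_or]
            exact ⟨⟨him, hiv⟩, hmv, hvnd'⟩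
          · simp only [List.mem_cons, not_or]
            exact ⟨fun h => hmj h.symm, hjv⟩
          · rw [show (i : Fin n) :: (m :: v) ++ [j] = i :: (m :: (v ++ [j])) by simp,
              List.Chain', List.isChain_cons_cons]
            exact ⟨hE, by simpa [List.Chain'] using hych⟩
    · rintro ⟨u, rfl, hlen, hnd, hju, hch⟩
      obtain ⟨m, v, rfl⟩ : ∃ m v, u = m :: v := by
        cases u with
        | nil => simp at hlen; omega
        | cons m v => exact ⟨m, v, rfl⟩
      simp only [List.nodup_cons, List.mem_cons, not_or] at hnd
      obtain ⟨⟨him, hiv⟩, hmv, hvnd⟩ := hnd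
      simp only [List.mem_cons, not_or] at hju
      obtain ⟨hjm, hjv⟩ := hju
      have hch' : List.Chain' (fun a b => (a, b) ∈ E) (i :: (m :: (v ++ [j]))) := by
        simpa using hch
      rw [List.Chain', List.isChain_cons_cons] at hch'
      obtain ⟨hE, hych⟩ := hch'
      refine ⟨?_, by simp⟩
      simp only [latinMatMul, Set.mem_iUnion, latinLang, Set.mem_setOf_eq]
      refine ⟨m, [i, m], ?_, m :: v ++ [j], ?_, ?_⟩
      · simp [latinMat, hE]
      · refine ((IH m j _).mpr ⟨v, rfl, by simpa using hlen, ?_, hjv, ?_⟩).1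
        · simp only [List.nodup_cons]
          exact ⟨hmv, hvnd⟩
        · simpa [List.Chain'] using hych
      · by_cases hji : j = i
        · subst hji
          exact (latin_eval2 j m v him hiv hmv hvnd).symm
        · exact (latin_eval1 i m j v him hiv (fun h => hji h.symm) hmv
            (fun h => hjm h.symm) hjv hvnd).symm

end Aux

/-- for every `i` and `1 ≤ k ≤ n`, the words of `L^[k]_{ii}` other than `λ`
are exactly the vertex sequences of the elementary circuits of length `k` starting at
`v_i`: lists `(w₀, …, w_k)` of `k+1` vertices with `w₀ = w_k = v_i`, the vertices
`w₀, …, w_{k-1}` pairwise distinct, and `(w_t, w_{t+1}) ∈ E` for all `t`. -/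
theorem latinPow_elementary_circuits (n : ℕ) (hn : 1 ≤ n) (E : Set (Fin n × Fin n))
    (i : Fin n) (k : ℕ) (hk1 : 1 ≤ k) (hk2 : k ≤ n) (w : List (Fin n)) :
    (w ∈ latinPow (latinMat E) k i i ∧ w ≠ []) ↔
      (w.length = k + 1 ∧ w.head? = some i ∧ w.getLast? = some i ∧
        w.dropLast.Nodup ∧ w.Chain' (fun a b => (a, b) ∈ E)) := by
  rw [key E k hk1 i i w]
  constructor
  · rintro ⟨u, rfl, hlen, hnd, hiu, hch⟩
    have hdl : ((i :: u) ++ [i]).dropLast = i :: u := List.dropLast_concat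
    refine ⟨by simp; omega, rfl, List.getLast?_concat, ?_, hch⟩
    rw [show (i : Fin n) :: u ++ [i] = (i :: u) ++ [i] from rfl, hdl]
    exact hnd
  · rintro ⟨hlen, hh, hl, hnd, hch⟩
    obtain ⟨u, rfl⟩ := decomp w (by omega) i i hh hl
    have hdl : ((i :: u) ++ [i]).dropLast = i :: u := List.dropLast_concat
    rw [show (i : Fin n) :: u ++ [i] = (i :: u) ++ [i] from rfl, hdl] at hnd
    refine ⟨u, rfl, ?_, hnd, (List.nodup_cons.mp hnd).1, hch⟩
    simp at hlen; omega
end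

section
/- Let G = (V, E) be a directed graph on n vertices with latin matrix L and latin powers L^[k]. The matrix L^[n] is diagonal in the semiring of distinguished languages: for all i ≠ j, L^[n]_{ij} = {λ} (the zero of the semiring). -/
attribute [local instance] Classical.propDecidable

lemma latinMat_cases {n : ℕ} (E : Set (Fin n × Fin n)) (i j : Fin n) (x : List (Fin n))
    (hx : x ∈ latinMat E i j) : x = [] ∨ x = [i, j] := by
  unfold latinMat at hx
  split at hx
  · rcases hx with h | h
    · exact Or.inl h
    · exact Or.inr h
  · exact Or.inl hx

lemma nil_mem_latinMat {n : ℕ} (E : Set (Fin n × Fin n)) (i j : Fin n) :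
    [] ∈ latinMat E i j := by
  unfold latinMat
  split <;> simp

lemma latin_nil_nil {α : Type*} : latin ([] : List α) [] = [] := by
  simp [latin, IsSimpleWord]

lemma nil_mem_latinPow {n : ℕ} (E : Set (Fin n × Fin n)) :
    ∀ k (i j : Fin n), [] ∈ latinPow (latinMat E) (k + 1) i j := by
  intro k
  induction k with
  | zero => intro i j; exact nil_mem_latinMat E i j
  | succ k ih =>
    intro i j
    show [] ∈ latinMatMul (latinMat E) (latinPow (latinMat E) (k + 1)) i j
    refine Set.mem_iUnion.2 ⟨i, ⟨[], nil_mem_latinMat E i i, [], ih i j, latin_nil_nil.symm⟩⟩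

lemma latinPow_inv {n : ℕ} (E : Set (Fin n × Fin n)) :
    ∀ k (i j : Fin n) (w : List (Fin n)), w ∈ latinPow (latinMat E) (k + 1) i j →
      w = [] ∨ (w.Nodup ∧ w.length = k + 2 ∧ w.head? = some i ∧ w.getLast? = some j) ∨
        (i = j ∧ ∃ (a : Fin n) (l : List (Fin n)), w = (a :: l) ++ [a]) := by
  intro k
  induction k with
  | zero =>
    intro i j w hw
    rcases latinMat_cases E i j w hw with rfl | rfl
    · exact Or.inl rfl
    · by_cases hij : i = j
      · exact Or.inr (Or.inr ⟨hij, i, [], by simp [hij]⟩)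
      · exact Or.inr (Or.inl ⟨by simp [hij], rfl, rfl, rfl⟩)
  | succ k ih =>
    intro i j w hw
    replace hw : w ∈ latinMatMul (latinMat E) (latinPow (latinMat E) (k + 1)) i j := hw
    rcases Set.mem_iUnion.1 hw with ⟨m, x, hx, y, hy, rfl⟩
    unfold latin
    split_ifs with h1 h2 h3
    · -- simple ∘ simple, first branch
      rcases latinMat_cases E i m x hx with rfl | rfl
      · exact absurd rfl h1.1.1
      · rcases ih m j y hy with rfl | hsy | ⟨rfl, a, l, rfl⟩
        · exact absurd rfl h1.2.1
        · obtain ⟨hnd, hlen, hhead, hlast⟩ := hsy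
          cases y with
          | nil => simp at hhead
          | cons b t =>
            simp only [List.head?_cons, Option.some.injEq] at hhead
            subst hhead
            refine Or.inr (Or.inl ?_)
            have him : i ≠ b := by
              have := h1.1.2; simp at this; exact this
            have hit : i ∉ t := h2.2 i (by simp)
            have hbt : b ∉ t := h2.2 b (by simp)
            have htnd : t.Nodup := (List.nodup_cons.1 hnd).2
            have htne : t ≠ [] := by
              intro h; subst h; simp at hlen
            refine ⟨?_, ?_, ?_, ?_⟩
            · simp [List.nodup_cons, him, hit, hbt, htnd]
            · simp at hlen ⊢; omega
            · simp
            · simp only [List.tail_cons]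
              show (i :: b :: t).getLast? = some j
              rw [List.getLast?_cons_cons]
              exact hlast
        · exfalso
          have := h1.2.2
          simp [List.nodup_append, List.nodup_cons] at this
    · -- second branch : cyclic
      rcases latinMat_cases E i m x hx with rfl | rfl
      · exact absurd rfl h1.1.1
      · rcases ih m j y hy with rfl | hsy | ⟨rfl, a, l, rfl⟩
        · exact absurd rfl h1.2.1
        · obtain ⟨hnd, hlen, hhead, hlast⟩ := hsy
          have hji : j = i := by
            have := h3.2.1
            rw [hlast] at this
            simp at this
            exact this
          cases y with
          | nil => simp at hhead
          | cons b t =>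
            exact Or.inr (Or.inr ⟨hji.symm, i, m :: t.dropLast, by simp⟩)
        · exfalso
          have := h1.2.2
          simp [List.nodup_append, List.nodup_cons] at this
    · exact Or.inl rfl
    · exact Or.inl rfl

/-- the matrix `L^[n]` is diagonal in the semiring of distinguished
languages: for all `i ≠ j`, `L^[n]_{ij} = {λ}` (the zero of the semiring). -/
theorem latinPow_n_diagonal (n : ℕ) (hn : 1 ≤ n) (E : Set (Fin n × Fin n))
    (i j : Fin n) (hij : i ≠ j) :
    latinPow (latinMat E) n i j = {([] : List (Fin n))} := by
  obtain ⟨k, rfl⟩ : ∃ k, n = k + 1 := ⟨n - 1, (Nat.succ_pred_eq_of_pos hn).symm⟩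
  ext w
  constructor
  · intro hw
    rcases latinPow_inv E k i j w hw with rfl | ⟨hnd, hlen, _⟩ | ⟨h, _⟩
    · rfl
    · exfalso
      have hcard := hnd.length_le_card
      simp [Fintype.card_fin] at hcard
      omega
    · exact absurd h hij
  · intro hw
    simp only [Set.mem_singleton_iff] at hw
    subst hw
    exact nil_mem_latinPow E k i j
end
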